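/- Theorem (existence of Hamilton-decomposable tournaments of every odd order): For every n ≥ 1 there exist n permutations σ₁, …, σ_n of a vertex set of size 2n+1 (e.g., Fin (2n+1)), each a single cycle of length 2n+1, such that the arc sets A_i = {(x, σ_i x) : x} are pairwise disjoint and their union is the arc set of a tournament: for every pair of distinct vertices x, y, exactly one of (x, y) and (y, x) lies in the union of the A_i. Consequently there exists a diregular tournament on 2n+1 points that decomposes into n arc-disjoint directed Hamilton circuits, whether or not 2n+1 is prime. -/

import Mathlib

namespace HamDec
def znat (n j : ℕ) : ℕ := if j % 2 = 1 then (j+1)/2 else if j = 0 then 0 else 2*n - j/2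
def zz (n j : ℕ) : ZMod (2*n) := (znat n j : ZMod (2*n))

lemma modeq_of_cases {m a b : ℕ} (h : a = b ∨ a + m = b ∨ a = b + m) : a ≡ b [MOD m] := by
  rcases h with rfl | rfl | rfl
  · rfl
  · exact (Nat.add_modEq_right).symm.trans (Nat.ModEq.refl _) |>.symm |>.symm
  · exact (Nat.add_modEq_right)

def jd (n : ℕ) (d : ZMod (2*n)) : ℕ := if d.val % 2 = 1 then d.val - 1 else 2*n - 1 - d.val

lemma jd_bound {n : ℕ} {d : ZMod (2*n)} (hn : 1 ≤ n) (hd : d ≠ 0) : jd n d + 2 ≤ 2*n := by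
  haveI : NeZero (2*n) := ⟨by omega⟩
  have h1 : d.val < 2*n := ZMod.val_lt d
  have h2 : d.val ≠ 0 := fun h => hd ((ZMod.val_eq_zero d).mp h)
  unfold jd; split_ifs <;> omega

lemma jd_spec {n : ℕ} {d : ZMod (2*n)} (hn : 1 ≤ n) (hd : d ≠ 0) :
    zz n (jd n d + 1) - zz n (jd n d) = d := by
  haveI : NeZero (2*n) := ⟨by omega⟩
  have h1 : d.val < 2*n := ZMod.val_lt d
  have h2 : d.val ≠ 0 := fun h => hd ((ZMod.val_eq_zero d).mp h)
  have hdc : ((d.val : ℕ) : ZMod (2*n)) = d := ZMod.natCast_rightInverse d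
  obtain ⟨j, hj⟩ : ∃ j, jd n d = j := ⟨_, rfl⟩
  have key : zz n (j+1) = ((d.val + znat n j : ℕ) : ZMod (2*n)) := by
    rw [zz, ZMod.natCast_eq_natCast_iff]
    apply modeq_of_cases
    unfold jd at hj; unfold znat; split_ifs at hj ⊢ <;> first | contradiction | omega
  rw [hj, sub_eq_iff_eq_add, key]
  push_cast [zz]
  rw [hdc]

lemma cases_of_modeq {m a b : ℕ} (h : a ≡ b [MOD m]) (ha : a < 2*m) (hb : b < 2*m) :
    a = b ∨ a + m = b ∨ a = b + m := by
  have h' : a % m = b % m := h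
  rcases Nat.lt_or_ge a m with h1 | h1 <;> rcases Nat.lt_or_ge b m with h2 | h2
  · rw [Nat.mod_eq_of_lt h1, Nat.mod_eq_of_lt h2] at h'; omega
  · rw [Nat.mod_eq_of_lt h1, Nat.mod_eq_sub_mod h2, Nat.mod_eq_of_lt (by omega)] at h'; omega
  · rw [Nat.mod_eq_sub_mod h1, Nat.mod_eq_of_lt (by omega), Nat.mod_eq_of_lt h2] at h'; omega
  · rw [Nat.mod_eq_sub_mod h1, Nat.mod_eq_of_lt (by omega), Nat.mod_eq_sub_mod h2,
      Nat.mod_eq_of_lt (by omega)] at h'; omega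

lemma znat_lt {n j : ℕ} (hn : 1 ≤ n) (hj : j < 2*n) : znat n j < 2*n := by
  unfold znat; split_ifs <;> omega

lemma zz_val {n j : ℕ} (hn : 1 ≤ n) (hj : j < 2*n) : (zz n j).val = znat n j := by
  haveI : NeZero (2*n) := ⟨by omega⟩
  exact ZMod.val_cast_of_lt (znat_lt hn hj)

lemma zz_inj {n j j' : ℕ} (hn : 1 ≤ n) (hj : j < 2*n) (hj' : j' < 2*n)
    (h : zz n j = zz n j') : j = j' := by
  have := congrArg ZMod.val h
  rw [zz_val hn hj, zz_val hn hj'] at this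
  unfold znat at this; split_ifs at this <;> omega

/-- reflection identity: `s (2n-1-j) = s j + n` -/
lemma zz_reflect {n j : ℕ} (hn : 1 ≤ n) (hj : j < 2*n) :
    zz n (2*n - 1 - j) = zz n j + (n : ZMod (2*n)) := by
  have : zz n j + (n : ZMod (2*n)) = ((znat n j + n : ℕ) : ZMod (2*n)) := by push_cast [zz]; ring
  rw [this, zz, ZMod.natCast_eq_natCast_iff]
  apply modeq_of_cases
  unfold znat; split_ifs <;> omega


set_option maxHeartbeats 1600000 in
/-- uniqueness of the arc position realizing a given difference -/
lemma diff_inj {n j j' : ℕ} (hn : 1 ≤ n) (hj : j + 2 ≤ 2*n) (hj' : j' + 2 ≤ 2*n)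
    (h : zz n (j+1) - zz n j = zz n (j'+1) - zz n j') : j = j' := by
  have h2 : ((znat n (j+1) + znat n j' : ℕ) : ZMod (2*n))
      = ((znat n (j'+1) + znat n j : ℕ) : ZMod (2*n)) := by
    push_cast
    have : zz n (j+1) + zz n j' = zz n (j'+1) + zz n j := by linear_combination h
    simpa [zz] using this
  rw [ZMod.natCast_eq_natCast_iff] at h2
  have b1 := znat_lt hn (show j+1 < 2*n by omega)
  have b2 := znat_lt hn (show j'+1 < 2*n by omega)
  have b3 := znat_lt hn (show j < 2*n by omega)
  have b4 := znat_lt hn (show j' < 2*n by omega)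
  rcases cases_of_modeq h2 (by omega) (by omega) with h3 | h3 | h3 <;>
  · unfold znat at h3
    split_ifs at h3 <;> first | contradiction | omega

/-- exactly one of `e`, `e + n` has value `< n` -/
lemma xor_val {n : ℕ} (hn : 1 ≤ n) (e : ZMod (2*n)) :
    Xor' (e.val < n) ((e + (n : ZMod (2*n))).val < n) := by
  haveI : NeZero (2*n) := ⟨by omega⟩
  have h1 : e.val < 2*n := ZMod.val_lt e
  have he : ((e.val : ℕ) : ZMod (2*n)) = e := ZMod.natCast_rightInverse e
  have : e + (n : ZMod (2*n)) = ((e.val + n : ℕ) : ZMod (2*n)) := by push_cast [he]; ring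
  rw [this, ZMod.val_natCast]
  rcases Nat.lt_or_ge e.val n with h | h
  · rw [Nat.mod_eq_of_lt (by omega)]
    exact Or.inl ⟨h, by omega⟩
  · rw [Nat.mod_eq_sub_mod (by omega), Nat.mod_eq_of_lt (by omega)]
    exact Or.inr ⟨by omega, by omega⟩

lemma exists_fin_iff {n : ℕ} (hn : 1 ≤ n) (c : ZMod (2*n)) :
    (∃ i : Fin n, c = ((i : ℕ) : ZMod (2*n))) ↔ c.val < n := by
  haveI : NeZero (2*n) := ⟨by omega⟩
  constructor
  · rintro ⟨i, rfl⟩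
    rw [ZMod.val_cast_of_lt (by omega : (i:ℕ) < 2*n)]
    exact i.2
  · intro h
    exact ⟨⟨c.val, h⟩, (ZMod.natCast_rightInverse c).symm⟩

lemma n_eq_neg_n {n : ℕ} : ((n : ℕ) : ZMod (2*n)) = -(n : ZMod (2*n)) := by
  have : ((2*n : ℕ) : ZMod (2*n)) = 0 := ZMod.natCast_self _
  push_cast at this
  linear_combination this


/-- the `i`-th Hamilton cycle as an enumeration of the vertices -/
def Ei (n : ℕ) (i : Fin n) : Fin (2*n+1) → Option (ZMod (2*n)) := fun a =>
  if a.val = 0 then none else some (zz n (a.val - 1) + ((i : ℕ) : ZMod (2*n)))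

lemma Ei_of_eq {n : ℕ} {i : Fin n} {a : Fin (2*n+1)} (h : a.val = 0) : Ei n i a = none :=
  if_pos h

lemma Ei_of_ne {n : ℕ} {i : Fin n} {a : Fin (2*n+1)} (h : ¬ a.val = 0) :
    Ei n i a = some (zz n (a.val - 1) + ((i : ℕ) : ZMod (2*n))) := if_neg h

lemma Ei_bij {n : ℕ} (hn : 1 ≤ n) (i : Fin n) : Function.Bijective (Ei n i) := by
  haveI : NeZero (2*n) := ⟨by omega⟩
  rw [Fintype.bijective_iff_injective_and_card]
  refine ⟨?_, by simp [ZMod.card]⟩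
  intro a b hab
  unfold Ei at hab
  split_ifs at hab with h1 h2 h2
  all_goals try simp at hab
  all_goals try exact Fin.ext (by omega)
  all_goals exact Fin.ext (by
    have h4 := zz_inj hn (by omega : a.val - 1 < 2*n) (by omega : b.val - 1 < 2*n) hab
    omega)

noncomputable def eEq (n : ℕ) (hn : 1 ≤ n) (i : Fin n) :
    Fin (2*n+1) ≃ Option (ZMod (2*n)) := Equiv.ofBijective _ (Ei_bij hn i)

/-- the `i`-th Hamilton cycle as a permutation of `Option (ZMod (2n))` -/
noncomputable def tau (n : ℕ) (hn : 1 ≤ n) (i : Fin n) :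
    Equiv.Perm (Option (ZMod (2*n))) :=
  (eEq n hn i).permCongr (finRotate (2*n+1))

lemma eEq_apply {n : ℕ} (hn : 1 ≤ n) (i : Fin n) (a : Fin (2*n+1)) :
    eEq n hn i a = Ei n i a := rfl

lemma tau_eq_iff {n : ℕ} (hn : 1 ≤ n) (i : Fin n) (x y : Option (ZMod (2*n))) :
    tau n hn i x = y ↔ ∃ a : Fin (2*n+1), x = eEq n hn i a ∧ y = eEq n hn i (a+1) := by
  constructor
  · intro h
    refine ⟨(eEq n hn i).symm x, by simp, ?_⟩
    rw [← h]
    simp [tau, Equiv.permCongr_apply, finRotate_succ_apply]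
  · rintro ⟨a, rfl, rfl⟩
    simp [tau, Equiv.permCongr_apply, finRotate_succ_apply]

lemma fin_add_one_val {n : ℕ} (hn : 1 ≤ n) (a : Fin (2*n+1)) :
    (a + 1).val = if a.val = 2*n then 0 else a.val + 1 := by
  have h1 : ((1 : Fin (2*n+1)) : ℕ) = 1 % (2*n+1) := Fin.val_one' _
  have h1' : (1 : ℕ) % (2*n+1) = 1 := (Nat.one_mod_eq_one (n := 2*n+1)).mpr (by omega)
  have h2 : (a + 1).val = (a.val + ((1 : Fin (2*n+1)) : ℕ)) % (2*n+1) := Fin.val_add _ _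
  rw [h1, h1'] at h2
  have h3 := a.isLt
  split_ifs with h
  · rw [h2, h]
    exact Nat.mod_self _
  · rw [h2]
    exact Nat.mod_eq_of_lt (by omega)

/-- full characterization of the arcs of the `i`-th cycle -/
lemma tau_iff {n : ℕ} (hn : 1 ≤ n) (i : Fin n) (x y : Option (ZMod (2*n))) :
    tau n hn i x = y ↔
      (x = none ∧ y = some (zz n 0 + ((i : ℕ) : ZMod (2*n)))) ∨
      (x = some (zz n (2*n-1) + ((i : ℕ) : ZMod (2*n))) ∧ y = none) ∨
      (∃ j : ℕ, j + 2 ≤ 2*n ∧ x = some (zz n j + ((i : ℕ) : ZMod (2*n)))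
        ∧ y = some (zz n (j+1) + ((i : ℕ) : ZMod (2*n)))) := by
  rw [tau_eq_iff hn]
  constructor
  · rintro ⟨a, rfl, rfl⟩
    have h3 := a.isLt
    rcases eq_or_ne a.val 0 with h | h
    · -- a.val = 0 : arc from infinity
      left
      have hv : (a + 1).val = 1 := by rw [fin_add_one_val hn, if_neg (by omega)]; omega
      rw [eEq_apply, eEq_apply, Ei_of_eq h, Ei_of_ne (by omega), hv]
      exact ⟨rfl, rfl⟩
    · rcases eq_or_ne a.val (2*n) with h2 | h2
      · -- a.val = 2n : arc to infinity
        right; left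
        have hv : (a + 1).val = 0 := by rw [fin_add_one_val hn, if_pos h2]
        rw [eEq_apply, eEq_apply, Ei_of_ne h, Ei_of_eq hv, h2]
        exact ⟨rfl, rfl⟩
      · -- middle arc
        right; right
        have hv : (a + 1).val = a.val + 1 := by rw [fin_add_one_val hn, if_neg h2]
        refine ⟨a.val - 1, by omega, ?_, ?_⟩
        · rw [eEq_apply, Ei_of_ne h]
        · rw [eEq_apply, Ei_of_ne (by omega), hv]
          congr 3
          omega
  · rintro (⟨rfl, rfl⟩ | ⟨rfl, rfl⟩ | ⟨j, hj, rfl, rfl⟩)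
    · refine ⟨0, ?_, ?_⟩
      · rw [eEq_apply, Ei_of_eq (Fin.val_zero _)]
      · have hv : ((0 : Fin (2*n+1)) + 1).val = 1 := by
          rw [fin_add_one_val hn, Fin.val_zero, if_neg (by omega)]
        rw [eEq_apply, Ei_of_ne (by omega), hv]
    · refine ⟨⟨2*n, by omega⟩, ?_, ?_⟩
      · rw [eEq_apply, Ei_of_ne (by simp; omega)]
      · have hv : ((⟨2*n, by omega⟩ : Fin (2*n+1)) + 1).val = 0 := by
          rw [fin_add_one_val hn]; simp
        rw [eEq_apply, Ei_of_eq hv]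
    · refine ⟨⟨j+1, by omega⟩, ?_, ?_⟩
      · rw [eEq_apply, Ei_of_ne (by simp)]
        norm_num
      · have hv : ((⟨j+1, by omega⟩ : Fin (2*n+1)) + 1).val = j + 2 := by
          rw [fin_add_one_val hn, if_neg (by simp; omega)]
        rw [eEq_apply, Ei_of_ne (by omega), hv]
        congr 3

lemma zz_zero {n : ℕ} : zz n 0 = 0 := by
  simp [zz, znat]

lemma zz_last {n : ℕ} (hn : 1 ≤ n) : zz n (2*n-1) = ((n : ℕ) : ZMod (2*n)) := by
  have h : znat n (2*n-1) = n := by unfold znat; split_ifs <;> omega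
  rw [zz, h]

/-- no fixed points -/
lemma tau_ne {n : ℕ} (hn : 1 ≤ n) (i : Fin n) (x : Option (ZMod (2*n))) :
    tau n hn i x ≠ x := by
  intro h
  rcases (tau_iff hn i x x).mp h with ⟨h1, h2⟩ | ⟨h1, h2⟩ | ⟨j, hj, h1, h2⟩
  · rw [h1] at h2; exact nomatch h2
  · rw [h2] at h1; exact nomatch h1
  · rw [h1] at h2
    have h3 := add_right_cancel (Option.some.inj h2)
    have := zz_inj hn (by omega : j < 2*n) (by omega : j+1 < 2*n) h3
    omega

lemma fin_cast_inj {n : ℕ} (hn : 1 ≤ n) {i i' : Fin n}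
    (h : ((i : ℕ) : ZMod (2*n)) = ((i' : ℕ) : ZMod (2*n))) : i = i' := by
  haveI : NeZero (2*n) := ⟨by omega⟩
  have := congrArg ZMod.val h
  rw [ZMod.val_cast_of_lt (by omega : (i:ℕ) < 2*n),
    ZMod.val_cast_of_lt (by omega : (i':ℕ) < 2*n)] at this
  exact Fin.ext this

/-- arc-disjointness of the cycles -/
lemma tau_disjoint {n : ℕ} (hn : 1 ≤ n) {i i' : Fin n} (hii : i ≠ i')
    (x : Option (ZMod (2*n))) : tau n hn i x ≠ tau n hn i' x := by
  intro h
  have h1 := (tau_iff hn i x (tau n hn i x)).mp rfl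
  have h2 := (tau_iff hn i' x (tau n hn i x)).mp h.symm
  rcases h1 with ⟨a1, b1⟩ | ⟨a1, b1⟩ | ⟨j, hj, a1, b1⟩ <;>
    rcases h2 with ⟨a2, b2⟩ | ⟨a2, b2⟩ | ⟨j', hj', a2, b2⟩
  · -- both from infinity
    rw [b1] at b2
    exact hii (fin_cast_inj hn (by simpa [zz_zero] using (Option.some.inj b2)))
  · rw [a1] at a2; exact nomatch a2
  · rw [b1] at b2
    have := Option.some.inj b2
    rw [zz_zero, zero_add] at this
    -- x = none but also x = some in a2? a1 : x = none, a2 : x = some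
    rw [a1] at a2; exact nomatch a2
  · rw [a1] at a2; exact nomatch a2
  · -- both to infinity
    rw [a1] at a2
    have e := Option.some.inj a2
    exact hii (fin_cast_inj hn (by
      have : ((i:ℕ) : ZMod (2*n)) = ((i':ℕ) : ZMod (2*n)) := by linear_combination e
      exact this))
  · rw [b2] at b1; exact nomatch b1
  · rw [a2] at a1; exact nomatch a1
  · rw [b1] at b2; exact nomatch b2
  · -- both middle arcs
    rw [a1] at a2
    rw [b1] at b2
    have e1 := Option.some.inj a2
    have e2 := Option.some.inj b2
    have hdiff : zz n (j+1) - zz n j = zz n (j'+1) - zz n j' := by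
      have : zz n (j+1) + ((i:ℕ) : ZMod (2*n)) - (zz n j + ((i:ℕ) : ZMod (2*n)))
          = zz n (j'+1) + ((i':ℕ) : ZMod (2*n)) - (zz n j' + ((i':ℕ) : ZMod (2*n))) := by
        rw [← e1, ← e2]
      linear_combination this
    have hjj : j = j' := diff_inj hn hj hj' hdiff
    rw [hjj] at e1
    exact hii (fin_cast_inj hn (add_left_cancel e1))

lemma two_n_zero {n : ℕ} : ((n:ℕ) : ZMod (2*n)) * 2 = 0 := by
  have : ((2*n : ℕ) : ZMod (2*n)) = 0 := ZMod.natCast_self _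
  push_cast at this
  linear_combination this

lemma arc_from_inf {n : ℕ} (hn : 1 ≤ n) (u : ZMod (2*n)) :
    (∃ i : Fin n, tau n hn i none = some u) ↔ u.val < n := by
  rw [← exists_fin_iff hn]
  constructor
  · rintro ⟨i, hi⟩
    rcases (tau_iff hn i none (some u)).mp hi with ⟨h1, h2⟩ | ⟨h1, h2⟩ | ⟨j, hj, h1, h2⟩
    · refine ⟨i, ?_⟩
      have := Option.some.inj h2
      rw [zz_zero, zero_add] at this
      exact this
    · exact nomatch h1
    · exact nomatch h1
  · rintro ⟨i, rfl⟩
    exact ⟨i, (tau_iff hn i _ _).mpr (Or.inl ⟨rfl, by rw [zz_zero, zero_add]⟩)⟩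

lemma arc_to_inf {n : ℕ} (hn : 1 ≤ n) (u : ZMod (2*n)) :
    (∃ i : Fin n, tau n hn i (some u) = none) ↔ (u + ((n:ℕ) : ZMod (2*n))).val < n := by
  rw [← exists_fin_iff hn]
  constructor
  · rintro ⟨i, hi⟩
    rcases (tau_iff hn i (some u) none).mp hi with ⟨h1, h2⟩ | ⟨h1, h2⟩ | ⟨j, hj, h1, h2⟩
    · exact nomatch h1
    · refine ⟨i, ?_⟩
      have := Option.some.inj h1
      rw [zz_last hn] at this
      rw [this, n_eq_neg_n (n := n)]
      linear_combination -two_n_zero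
    · exact nomatch h2
  · rintro ⟨i, hi⟩
    refine ⟨i, (tau_iff hn i _ _).mpr (Or.inr (Or.inl ⟨?_, rfl⟩))⟩
    rw [zz_last hn]
    congr 1
    linear_combination hi - two_n_zero

/-- the middle-arc characterization -/
lemma arc_ss {n : ℕ} (hn : 1 ≤ n) (u w : ZMod (2*n)) (huw : u ≠ w) :
    (∃ i : Fin n, tau n hn i (some u) = some w) ↔ (u - zz n (jd n (w - u))).val < n := by
  have hd : w - u ≠ 0 := sub_ne_zero.mpr (Ne.symm huw)
  rw [← exists_fin_iff hn]
  constructor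
  · rintro ⟨i, hi⟩
    rcases (tau_iff hn i (some u) (some w)).mp hi with ⟨h1, h2⟩ | ⟨h1, h2⟩ | ⟨j, hj, h1, h2⟩
    · exact nomatch h1
    · exact nomatch h2
    · have e1 := Option.some.inj h1
      have e2 := Option.some.inj h2
      have hdiff : zz n (j+1) - zz n j = w - u := by
        rw [e1, e2]; ring
      have hj0 : j = jd n (w - u) := by
        refine diff_inj hn hj (jd_bound hn hd) ?_
        rw [hdiff, jd_spec hn hd]
      refine ⟨i, ?_⟩
      rw [← hj0, e1]
      ring
  · rintro ⟨i, hi⟩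
    refine ⟨i, (tau_iff hn i _ _).mpr (Or.inr (Or.inr ⟨jd n (w-u), jd_bound hn hd, ?_, ?_⟩))⟩
    · congr 1
      linear_combination hi
    · congr 1
      have hs := jd_spec hn hd
      linear_combination hi - hs

/-- tournament property at the `Option (ZMod (2n))` level -/
lemma tau_xor {n : ℕ} (hn : 1 ≤ n) (x y : Option (ZMod (2*n))) (hxy : x ≠ y) :
    Xor' (∃ i : Fin n, tau n hn i x = y) (∃ i : Fin n, tau n hn i y = x) := by
  haveI : NeZero (2*n) := ⟨by omega⟩
  match x, y with
  | none, none => exact absurd rfl hxy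
  | none, some u =>
      rw [arc_from_inf hn, arc_to_inf hn]
      exact xor_val hn u
  | some u, none =>
      rw [arc_from_inf hn, arc_to_inf hn]
      exact (xor_val hn u).symm
  | some u, some w =>
      have huw : u ≠ w := fun h => hxy (by rw [h])
      have hd : w - u ≠ 0 := sub_ne_zero.mpr (Ne.symm huw)
      have hd' : u - w ≠ 0 := sub_ne_zero.mpr huw
      rw [arc_ss hn u w huw, arc_ss hn w u huw.symm]
      -- identify the reverse position
      set j0 := jd n (w - u) with hj0def
      have hb0 : j0 + 2 ≤ 2*n := jd_bound hn hd
      have hs0 : zz n (j0+1) - zz n j0 = w - u := jd_spec hn hd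
      have heq1 : 2*n - 2 - j0 + 1 = 2*n - 1 - j0 := by omega
      have heq2 : 2*n - 1 - (j0 + 1) = 2*n - 2 - j0 := by omega
      have hr1 : zz n (2*n - 1 - j0) = zz n j0 + ((n:ℕ) : ZMod (2*n)) :=
        zz_reflect hn (by omega)
      have hr2 : zz n (2*n - 2 - j0) = zz n (j0+1) + ((n:ℕ) : ZMod (2*n)) := by
        rw [← heq2]; exact zz_reflect hn (by omega)
      have hrev : jd n (u - w) = 2*n - 2 - j0 := by
        refine diff_inj hn (jd_bound hn hd') (by omega) ?_
        rw [jd_spec hn hd', heq1, hr1, hr2]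
        linear_combination hs0
      rw [hrev]
      have hkey : w - zz n (2*n - 2 - j0) = (u - zz n j0) + ((n:ℕ) : ZMod (2*n)) := by
        rw [hr2]
        linear_combination -hs0 - two_n_zero
      rw [hkey]
      exact xor_val hn (u - zz n j0)

open Fin.NatCast in
lemma finRotate_pow_apply {m : ℕ} (k : ℕ) (v : Fin (m+1)) :
    ((finRotate (m+1))^k) v = v + (k : Fin (m+1)) := by
  induction k with
  | zero => simp
  | succ k ih =>
      rw [pow_succ', Equiv.Perm.mul_apply, ih, finRotate_succ_apply]
      push_cast
      abel

open Fin.NatCast in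
lemma exists_pow_finRotate {m : ℕ} (v w : Fin (m+1)) :
    ∃ k : ℕ, w = ((finRotate (m+1))^k) v := by
  refine ⟨(w - v).val, ?_⟩
  rw [finRotate_pow_apply, Fin.cast_val_eq_self]
  abel

lemma permCongr_pow {α β : Type*} (e : α ≃ β) (p : Equiv.Perm α) (k : ℕ) :
    (e.permCongr p)^k = e.permCongr (p^k) := by
  induction k with
  | zero => ext x; simp
  | succ k ih =>
      ext x
      simp [pow_succ, ih, Equiv.Perm.mul_apply, Equiv.permCongr_apply]

theorem exists_hamilton_decomposable_tournament' (n : ℕ) (hn : 1 ≤ n) :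
    ∃ σ : Fin n → Equiv.Perm (Fin (2 * n + 1)),
      (∀ i : Fin n, ∀ v : Fin (2 * n + 1),
        {w : Fin (2 * n + 1) | ∃ k : ℕ, w = ((σ i) ^ k) v} = Set.univ) ∧
      (∀ i : Fin n, ∀ x : Fin (2 * n + 1), σ i x ≠ x) ∧
      (∀ i j : Fin n, i ≠ j → ∀ x : Fin (2 * n + 1), σ i x ≠ σ j x) ∧
      (∀ x y : Fin (2 * n + 1), x ≠ y →
        Xor' (∃ i : Fin n, σ i x = y) (∃ i : Fin n, σ i y = x)) := by
  haveI : NeZero (2*n) := ⟨by omega⟩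
  have hcard : Fintype.card (Option (ZMod (2*n))) = 2*n+1 := by simp [ZMod.card]
  obtain ⟨g⟩ : Nonempty (Option (ZMod (2*n)) ≃ Fin (2*n+1)) :=
    ⟨Fintype.equivFinOfCardEq hcard⟩
  refine ⟨fun i => g.permCongr (tau n hn i), ?_, ?_, ?_, ?_⟩
  · -- each permutation is a single full cycle
    intro i v
    apply Set.eq_univ_iff_forall.mpr
    intro w
    obtain ⟨k, hk⟩ := exists_pow_finRotate ((eEq n hn i).symm (g.symm v))
      ((eEq n hn i).symm (g.symm w))
    refine ⟨k, ?_⟩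
    have h1 : (g.permCongr (tau n hn i))^k
        = g.permCongr ((eEq n hn i).permCongr ((finRotate (2*n+1))^k)) := by
      rw [permCongr_pow, show tau n hn i = (eEq n hn i).permCongr (finRotate (2*n+1)) from rfl,
        permCongr_pow]
    rw [h1, Equiv.permCongr_apply, Equiv.permCongr_apply, ← hk]
    simp
  · -- no loops
    intro i x hx
    apply tau_ne hn i (g.symm x)
    have h2 := congrArg g.symm hx
    simpa [Equiv.permCongr_apply] using h2
  · -- arc-disjointness
    intro i j hij x hx
    apply tau_disjoint hn hij (g.symm x)
    have h2 := congrArg g.symm hx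
    simpa [Equiv.permCongr_apply] using h2
  · -- tournament property
    intro x y hxy
    have hxy' : g.symm x ≠ g.symm y := fun h => hxy (by simpa using congrArg g h)
    have h := tau_xor hn (g.symm x) (g.symm y) hxy'
    have key : ∀ (i : Fin n) (x y : Fin (2*n+1)),
        g.permCongr (tau n hn i) x = y ↔ tau n hn i (g.symm x) = g.symm y := by
      intro i x y
      rw [Equiv.permCongr_apply]
      exact ⟨fun h => by rw [← h]; simp, fun h => by rw [h]; simp⟩
    simp only [key]
    exact h

end HamDec

/-- Existence of Hamilton-decomposable tournaments of every odd order: for every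
`n ≥ 1` there exist `n` permutations of `Fin (2n+1)`, each a single cycle of
length `2n+1`, whose arc sets `{(x, σᵢ x)}` are pairwise disjoint, contain no
loops, and whose union is the arc set of a tournament: for distinct `x, y`
exactly one of `(x, y)` and `(y, x)` lies in the union. Hence there is a
diregular tournament on `2n+1` points decomposing into `n` arc-disjoint directed
Hamilton circuits, whether or not `2n+1` is prime. -/
theorem exists_hamilton_decomposable_tournament (n : ℕ) (hn : 1 ≤ n) :
    ∃ σ : Fin n → Equiv.Perm (Fin (2 * n + 1)),
      (∀ i : Fin n, ∀ v : Fin (2 * n + 1),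
        {w : Fin (2 * n + 1) | ∃ k : ℕ, w = ((σ i) ^ k) v} = Set.univ) ∧
      (∀ i : Fin n, ∀ x : Fin (2 * n + 1), σ i x ≠ x) ∧
      (∀ i j : Fin n, i ≠ j → ∀ x : Fin (2 * n + 1), σ i x ≠ σ j x) ∧
      (∀ x y : Fin (2 * n + 1), x ≠ y →
        Xor' (∃ i : Fin n, σ i x = y) (∃ i : Fin n, σ i y = x)) := by
  exact HamDec.exists_hamilton_decomposable_tournament' n hn
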